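/- Let λ be a partition of a positive integer n, 𝝀 its d-fold dilation (a partition of d²n), and α a sequence of positive d-divisible integers summing to d²n. Then the pairing (σ, C) ↦ C·Φ(σ)^{-1}, where Φ(σ) is the block-diagonal matrix with λ₁ + ℓ(λ) copies of the d×d permutation matrix of σ, defines a group action of S_d on the set 𝒞(𝝀, α) of cascades of shape 𝝀 and content α. -/

import Mathlib

/-- Murnaghan–Nakayama recursion on beta-sets: `MNchar S α` computes the character
value via successive rim-hook (border-strip) removals encoded by beta-numbers. -/
def MNchar : Finset ℕ → List ℕ → ℤ
  | S, [] => if S = Finset.range S.card then 1 else 0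
  | S, k :: rest =>
      ∑ s ∈ S.filter (fun s => k ≤ s ∧ s - k ∉ S),
        (-1 : ℤ) ^ (S.filter (fun t => s - k < t ∧ t < s)).card *
          MNchar (insert (s - k) (S.erase s)) rest

/-- Canonical beta-set of a partition (given as a multiset of parts). -/
def betaSet (P : Multiset ℕ) : Finset ℕ :=
  ((List.range (P.sort (· ≤ ·)).length).map
    (fun i => (P.sort (· ≤ ·)).getD i 0 + i)).toFinset

/-- Irreducible character of the symmetric group indexed by `lam`, at cycle type `mu`. -/
def chi (lam mu : Multiset ℕ) : ℤ := MNchar (betaSet lam) (mu.sort (· ≤ ·))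

/-- d-fold dilation of a partition: each part p becomes d copies of d*p. -/
def dilate (d : ℕ) (P : Multiset ℕ) : Multiset ℕ :=
  P.bind fun p => Multiset.replicate d (d * p)

/-- Scale every part of a partition by d. -/
def scale (d : ℕ) (P : Multiset ℕ) : Multiset ℕ := P.map (d * ·)

def IsPartitionOf (n : ℕ) (P : Multiset ℕ) : Prop := (∀ p ∈ P, 0 < p) ∧ P.sum = n

def zerosBefore (β : List Bool) (j : ℕ) : ℕ := (β.take j).count false

/-- Shape of a binary sequence: one part for each `true`, equal to the number of
`false`s to its left (zero parts discarded). -/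
def shapeOf (β : List Bool) : Multiset ℕ :=
  ↑((List.range β.length).filterMap fun j =>
      if β.getD j false = true ∧ 0 < zerosBefore β j then some (zerosBefore β j) else none)

/-- The word of a partition: the unique binary sequence starting with 0 and ending
with 1 whose shape is the partition. -/
def word (P : Multiset ℕ) : List Bool :=
  (List.range (P.sup + Multiset.card P)).map fun j => decide (j ∈ betaSet P)

/-- Cells of the Young diagram of a partition. -/
def cells (P : Multiset ℕ) : Finset (ℕ × ℕ) :=
  (Finset.range (Multiset.card P) ×ˢ Finset.range (P.sup + 1)).filter
    fun x => x.2 < ((P.sort (· ≤ ·)).reverse.getD x.1 0)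

def CellAdj (x y : ℕ × ℕ) : Prop :=
  (x.1 = y.1 ∧ (x.2 = y.2 + 1 ∨ y.2 = x.2 + 1)) ∨
  (x.2 = y.2 ∧ (x.1 = y.1 + 1 ∨ y.1 = x.1 + 1))

/-- A set of cells is a rim hook: nonempty, connected, no 2×2 square. -/
def IsRimHook (s : Finset (ℕ × ℕ)) : Prop :=
  s.Nonempty ∧
  (∀ x ∈ s, ∀ y ∈ s, Relation.ReflTransGen (fun u v => v ∈ s ∧ CellAdj u v) x y) ∧
  ∀ i j : ℕ, ¬((i, j) ∈ s ∧ (i + 1, j) ∈ s ∧ (i, j + 1) ∈ s ∧ (i + 1, j + 1) ∈ s)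

/-- A cascade, encoded by its first row and the sequence of 0-1 swap positions
`(aᵢ, bᵢ)` relating consecutive rows. -/
structure Cascade where
  top : List Bool
  swaps : List (ℕ × ℕ)

def applySwaps (r : List Bool) (s : List (ℕ × ℕ)) : List Bool :=
  s.foldl (fun r ab => (r.set ab.1 true).set ab.2 false) r

def cascadeRow (C : Cascade) (i : ℕ) : List Bool := applySwaps C.top (C.swaps.take i)

def cascadeBot (C : Cascade) : List Bool := applySwaps C.top C.swaps

/-- The defining conditions of a cascade. -/
def Cascade.Valid (C : Cascade) : Prop :=
  C.top.head? = some false ∧ C.top.getLast? = some true ∧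
  (∀ i < C.swaps.length,
    (C.swaps.getD i (0, 0)).1 < (C.swaps.getD i (0, 0)).2 ∧
    (C.swaps.getD i (0, 0)).2 < (cascadeRow C i).length ∧
    (cascadeRow C i).getD (C.swaps.getD i (0, 0)).1 true = false ∧
    (cascadeRow C i).getD (C.swaps.getD i (0, 0)).2 false = true) ∧
  ∃ u v, cascadeBot C = List.replicate u true ++ List.replicate v false

def cascadeShape (C : Cascade) : Multiset ℕ := shapeOf C.top

def cascadeContent (C : Cascade) : List ℕ := C.swaps.map fun ab => ab.2 - ab.1

/-- Crossings of a cascade: pairs (i,j) with row i having a 1 in position j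
strictly between the swapped positions aᵢ < j < bᵢ. -/
def cascadeCrossings (C : Cascade) : Finset (ℕ × ℕ) :=
  (Finset.range C.swaps.length ×ˢ Finset.range C.top.length).filter fun ij =>
    (cascadeRow C ij.1).getD ij.2 false = true ∧
    (C.swaps.getD ij.1 (0, 0)).1 < ij.2 ∧ ij.2 < (C.swaps.getD ij.1 (0, 0)).2

def cascadeWt (C : Cascade) : ℤ := (-1) ^ (cascadeCrossings C).card

def traceSwaps (s : List (ℕ × ℕ)) (p : ℕ) : ℕ :=
  s.foldl (fun p ab => if p = ab.1 then ab.2 else if p = ab.2 then ab.1 else p) p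

/-- The path starting in column x: its position after i swaps. -/
def cascadePath (C : Cascade) (x i : ℕ) : ℕ := traceSwaps (C.swaps.take i) x

def onesPositions (r : List Bool) : List ℕ :=
  (List.range r.length).filter fun j => r.getD j false

/-- The permutation π_C associated to a cascade, as a function on {0,…,k−1}. -/
def cascadePerm (C : Cascade) (j : ℕ) : ℕ :=
  (onesPositions (cascadeBot C)).idxOf
    (traceSwaps C.swaps ((onesPositions C.top).getD j 0))

/-- Sign of a function on {0,…,k−1} via inversion count. -/
def signOf (f : ℕ → ℕ) (k : ℕ) : ℤ :=
  (-1) ^ ((Finset.range k ×ˢ Finset.range k).filter fun p =>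
      p.1 < p.2 ∧ f p.2 < f p.1).card

/-- Crossings of the two paths starting in columns x and y. -/
def pathCrossings (C : Cascade) (x y : ℕ) : Finset (ℕ × ℕ) :=
  (Finset.range C.swaps.length ×ˢ Finset.range C.top.length).filter fun ij =>
    cascadePath C x ij.1 = ij.2 ∧ cascadePath C x ij.1 < cascadePath C y ij.1 ∧
    cascadePath C y (ij.1 + 1) < cascadePath C x (ij.1 + 1)

def rimRows (s : Finset (ℕ × ℕ)) : ℕ := (s.image Prod.fst).card

/-- A rim hook tableau, as the chain of successive shapes λ¹ ⊃ … ⊃ λ^{m+1} = ∅. -/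
def IsRHT (T : List (Multiset ℕ)) : Prop :=
  2 ≤ T.length ∧ (∀ P ∈ T, ∀ p ∈ P, 0 < p) ∧ T.getLast? = some 0 ∧
  ∀ i, i + 1 < T.length →
    cells (T.getD (i + 1) 0) ⊆ cells (T.getD i 0) ∧
    IsRimHook (cells (T.getD i 0) \ cells (T.getD (i + 1) 0))

def tabShape (T : List (Multiset ℕ)) : Multiset ℕ := T.headI

def tabContent (T : List (Multiset ℕ)) : List ℕ :=
  (List.range (T.length - 1)).map fun i =>
    (cells (T.getD i 0) \ cells (T.getD (i + 1) 0)).card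

def tabWt (T : List (Multiset ℕ)) : ℤ :=
  ∏ i ∈ Finset.range (T.length - 1),
    (-1 : ℤ) ^ (rimRows (cells (T.getD i 0) \ cells (T.getD (i + 1) 0)) - 1)

/-- Θ : cascades → rim hook tableaux, via the shapes of the successive rows. -/
def theta (C : Cascade) : List (Multiset ℕ) :=
  (List.range (C.swaps.length + 1)).map fun i => shapeOf (cascadeRow C i)

/-- The block column permutation: j = i + d·k with i < d goes to σ(i) + d·k. -/
def gammaMap (d : ℕ) (σ : Equiv.Perm (Fin d)) (j : ℕ) : ℕ :=
  if h : 0 < d then d * (j / d) + (σ ⟨j % d, Nat.mod_lt j h⟩ : ℕ) else j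

def permuteCols (d : ℕ) (σ : Equiv.Perm (Fin d)) (r : List Bool) : List Bool :=
  (List.range r.length).map fun j => r.getD (gammaMap d σ⁻¹ j) false

/-- The action of σ ∈ S_d on a cascade: permute columns within blocks of size d. -/
def actC (d : ℕ) (σ : Equiv.Perm (Fin d)) (C : Cascade) : Cascade :=
  ⟨permuteCols d σ C.top, C.swaps.map fun ab => (gammaMap d σ ab.1, gammaMap d σ ab.2)⟩

section

variable {d : ℕ}


lemma gammaMap_def (hd : 0 < d) (σ : Equiv.Perm (Fin d)) (j : ℕ) :
    gammaMap d σ j = d * (j / d) + (σ ⟨j % d, Nat.mod_lt j hd⟩ : ℕ) := by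
  simp [gammaMap, hd]

lemma gammaMap_div (hd : 0 < d) (σ : Equiv.Perm (Fin d)) (j : ℕ) :
    gammaMap d σ j / d = j / d := by
  rw [gammaMap_def hd, Nat.mul_add_div hd, Nat.div_eq_of_lt (Fin.is_lt _), Nat.add_zero]

lemma gammaMap_mod (hd : 0 < d) (σ : Equiv.Perm (Fin d)) (j : ℕ) :
    gammaMap d σ j % d = (σ ⟨j % d, Nat.mod_lt j hd⟩ : ℕ) := by
  rw [gammaMap_def hd, Nat.mul_add_mod, Nat.mod_eq_of_lt (Fin.is_lt _)]

lemma gammaMap_comp (hd : 0 < d) (σ τ : Equiv.Perm (Fin d)) (j : ℕ) :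
    gammaMap d σ (gammaMap d τ j) = gammaMap d (σ * τ) j := by
  rw [gammaMap_def hd σ (gammaMap d τ j), gammaMap_div hd, gammaMap_def hd (σ * τ)]
  have hfin : (⟨gammaMap d τ j % d, Nat.mod_lt _ hd⟩ : Fin d) = τ ⟨j % d, Nat.mod_lt j hd⟩ :=
    Fin.ext (gammaMap_mod hd τ j)
  rw [hfin, Equiv.Perm.mul_apply]

lemma gammaMap_one (hd : 0 < d) (j : ℕ) : gammaMap d 1 j = j := by
  rw [gammaMap_def hd]
  simpa using Nat.div_add_mod j d

lemma gammaMap_inv (hd : 0 < d) (σ : Equiv.Perm (Fin d)) (j : ℕ) :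
    gammaMap d σ⁻¹ (gammaMap d σ j) = j := by
  rw [gammaMap_comp hd, inv_mul_cancel, gammaMap_one hd]

lemma gammaMap_lt (hd : 0 < d) (σ : Equiv.Perm (Fin d)) {j m : ℕ} (hm : d ∣ m) (hj : j < m) :
    gammaMap d σ j < m := by
  rw [gammaMap_def hd]
  calc d * (j / d) + (σ ⟨j % d, Nat.mod_lt j hd⟩ : ℕ) < d * (j / d) + d := by
        exact Nat.add_lt_add_left (Fin.is_lt _) _
    _ = d * (j / d + 1) := by ring
    _ ≤ d * (m / d) := Nat.mul_le_mul_left d (Nat.div_lt_div_of_lt_of_dvd hm hj)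
    _ = m := Nat.mul_div_cancel' hm

lemma gammaMap_add (hd : 0 < d) (σ : Equiv.Perm (Fin d)) (a c : ℕ) (hc : d ∣ c) :
    gammaMap d σ (a + c) = gammaMap d σ a + c := by
  obtain ⟨e, rfl⟩ := hc
  rw [gammaMap_def hd, gammaMap_def hd]
  have h1 : (a + d * e) / d = a / d + e := by
    rw [Nat.add_mul_div_left _ _ hd]
  have h2 : (a + d * e) % d = a % d := by simp [Nat.add_mul_mod_self_left]
  have : (σ ⟨(a + d * e) % d, Nat.mod_lt _ hd⟩ : ℕ) = (σ ⟨a % d, Nat.mod_lt _ hd⟩ : ℕ) :=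
    congrArg (fun x => (σ x : ℕ)) (Fin.ext h2)
  rw [h1, this, Nat.mul_add]
  ring
end
section
variable {d : ℕ}

lemma length_permuteCols (σ : Equiv.Perm (Fin d)) (r : List Bool) :
    (permuteCols d σ r).length = r.length := by simp [permuteCols]

lemma getElem_permuteCols (σ : Equiv.Perm (Fin d)) (r : List Bool) {j : ℕ}
    (h : j < (permuteCols d σ r).length) :
    (permuteCols d σ r)[j] = r.getD (gammaMap d σ⁻¹ j) false := by
  simp [permuteCols]

lemma gammaMap_ge (hd : 0 < d) (σ : Equiv.Perm (Fin d)) {j m : ℕ} (hm : d ∣ m) (hj : m ≤ j) :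
    m ≤ gammaMap d σ j := by
  rw [gammaMap_def hd]
  calc m = d * (m / d) := (Nat.mul_div_cancel' hm).symm
    _ ≤ d * (j / d) := Nat.mul_le_mul_left d (Nat.div_le_div_right hj)
    _ ≤ _ := Nat.le_add_right _ _

lemma getD_permuteCols (hd : 0 < d) (σ : Equiv.Perm (Fin d)) (r : List Bool)
    (hlen : d ∣ r.length) (j : ℕ) :
    (permuteCols d σ r).getD j false = r.getD (gammaMap d σ⁻¹ j) false := by
  rcases lt_or_ge j r.length with h | h
  · rw [List.getD_eq_getElem _ _ (by rwa [length_permuteCols]), getElem_permuteCols]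
  · rw [List.getD_eq_default _ _ (by rwa [length_permuteCols]),
      List.getD_eq_default _ _ (gammaMap_ge hd _ hlen h)]

lemma permuteCols_set (hd : 0 < d) (σ : Equiv.Perm (Fin d)) (r : List Bool)
    (hlen : d ∣ r.length) (p : ℕ) (v : Bool) :
    permuteCols d σ (r.set p v) = (permuteCols d σ r).set (gammaMap d σ p) v := by
  rcases lt_or_ge p r.length with hp | hp
  · apply List.ext_getElem
    · simp [length_permuteCols]
    · intro j h1 h2
      have hj : j < r.length := by simpa [length_permuteCols] using h1
      have hγ : gammaMap d σ⁻¹ j < r.length := gammaMap_lt hd _ hlen hj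
      rw [getElem_permuteCols, List.getElem_set, List.getD_eq_getElem _ _ (by simpa using hγ)]
      rw [List.getElem_set]
      have hiff : p = gammaMap d σ⁻¹ j ↔ gammaMap d σ p = j := by
        constructor
        · rintro rfl
          have := gammaMap_inv hd σ⁻¹ j
          rwa [inv_inv] at this
        · rintro rfl; exact (gammaMap_inv hd σ p).symm
      rcases eq_or_ne (gammaMap d σ p) j with he | he
      · rw [if_pos he, if_pos (hiff.mpr he)]
      · rw [if_neg he, if_neg (fun hc => he (hiff.mp hc)), getElem_permuteCols,
          List.getD_eq_getElem _ _ hγ]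
  · rw [List.set_eq_of_length_le hp, List.set_eq_of_length_le]
    rw [length_permuteCols]
    exact gammaMap_ge hd _ hlen hp

lemma permuteCols_applySwaps (hd : 0 < d) (σ : Equiv.Perm (Fin d)) (r : List Bool)
    (hlen : d ∣ r.length) (s : List (ℕ × ℕ)) :
    applySwaps (permuteCols d σ r) (s.map fun ab => (gammaMap d σ ab.1, gammaMap d σ ab.2)) =
      permuteCols d σ (applySwaps r s) := by
  induction s generalizing r with
  | nil => rfl
  | cons ab s ih =>
      simp only [List.map_cons, applySwaps, List.foldl_cons]
      have h1 : d ∣ (r.set ab.1 true).length := by simpa using hlen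
      have h2 : d ∣ ((r.set ab.1 true).set ab.2 false).length := by simpa using hlen
      have := ih ((r.set ab.1 true).set ab.2 false) h2
      simp only [applySwaps] at this
      rw [← this, permuteCols_set hd σ (r.set ab.1 true) h1 ab.2 false,
        permuteCols_set hd σ r hlen ab.1 true]

end
section

lemma count_true_set_true {r : List Bool} {p : ℕ} (h : p < r.length)
    (hf : r.getD p true = false) : (r.set p true).count true = r.count true + 1 := by
  rw [List.getD_eq_getElem _ _ h] at hf
  rw [List.count_set h, hf]
  simp

lemma count_true_set_false {r : List Bool} {p : ℕ} (h : p < r.length)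
    (ht : r.getD p false = true) : (r.set p false).count true + 1 = r.count true := by
  rw [List.getD_eq_getElem _ _ h] at ht
  have hpos : 0 < r.count true := List.count_pos_iff.mpr (ht ▸ List.getElem_mem h)
  rw [List.count_set h, ht]
  simp
  omega

lemma length_applySwaps (r : List Bool) (s : List (ℕ × ℕ)) :
    (applySwaps r s).length = r.length := by
  induction s generalizing r with
  | nil => rfl
  | cons ab s ih =>
      simp only [applySwaps, List.foldl_cons] at *
      rw [ih]; simp

lemma length_cascadeRow (C : Cascade) (i : ℕ) :
    (cascadeRow C i).length = C.top.length := length_applySwaps _ _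

lemma cascadeRow_zero (C : Cascade) : cascadeRow C 0 = C.top := rfl

lemma cascadeRow_succ (C : Cascade) {i : ℕ} (h : i < C.swaps.length) :
    cascadeRow C (i + 1) =
      ((cascadeRow C i).set (C.swaps.getD i (0, 0)).1 true).set (C.swaps.getD i (0, 0)).2 false := by
  unfold cascadeRow
  rw [List.take_succ, List.getElem?_eq_getElem h, List.getD_eq_getElem _ _ h]
  simp only [applySwaps, Option.toList_some, List.foldl_append, List.foldl_cons, List.foldl_nil]

lemma cascadeBot_eq_row (C : Cascade) : cascadeBot C = cascadeRow C C.swaps.length := by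
  unfold cascadeBot cascadeRow
  rw [List.take_length]

lemma count_true_cascadeRow (C : Cascade) (hv : C.Valid) :
    ∀ i ≤ C.swaps.length, (cascadeRow C i).count true = C.top.count true := by
  intro i
  induction i with
  | zero => intro _; rfl
  | succ i ih =>
      intro hi
      have hi' : i < C.swaps.length := hi
      obtain ⟨hab, hb, hfa, htb⟩ := hv.2.2.1 i hi'
      rw [cascadeRow_succ C hi']
      have hblen : (C.swaps.getD i (0, 0)).2 < (cascadeRow C i).length := hb
      have halen : (C.swaps.getD i (0, 0)).1 < (cascadeRow C i).length := lt_trans hab hb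
      have h1 : ((cascadeRow C i).set (C.swaps.getD i (0, 0)).1 true).count true
          = (cascadeRow C i).count true + 1 := count_true_set_true halen hfa
      have hb2 : ((cascadeRow C i).set (C.swaps.getD i (0, 0)).1 true).getD
          (C.swaps.getD i (0, 0)).2 false = true := by
        rw [List.getD_eq_getElem _ _ (by simpa using hblen), List.getElem_set,
          if_neg (Nat.ne_of_lt hab)]
        rw [List.getD_eq_getElem _ _ hblen] at htb
        exact htb
      have h2 := count_true_set_false (p := (C.swaps.getD i (0, 0)).2)
        (r := (cascadeRow C i).set (C.swaps.getD i (0, 0)).1 true) (by simpa using hblen) hb2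
      have h3 := ih (le_of_lt hi')
      omega

end
section

lemma filterMap_ite {α β : Type*} (l : List α) (P : α → Prop) [DecidablePred P] (f : α → β) :
    (l.filterMap fun a => if P a then some (f a) else none) =
      (l.filter fun a => decide (P a)).map f := by
  induction l with
  | nil => rfl
  | cons a t ih => by_cases h : P a <;> simp [h, ih]

lemma zb_add (β : List Bool) : ∀ p, p ≤ β.length →
    zerosBefore β p + ((List.range p).filter fun j => β.getD j false).length = p := by
  intro p
  induction p with
  | zero => intro _; simp [zerosBefore]
  | succ p ih =>
      intro hp
      have hlt : p < β.length := hp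
      have hgd : β.getD p false = β[p] := List.getD_eq_getElem _ _ hlt
      unfold zerosBefore at *
      rw [List.take_succ, List.getElem?_eq_getElem hlt, Option.toList_some, List.range_succ,
        List.count_append, List.filter_append, List.length_append]
      have h3 : List.count false [β[p]] + (List.filter (fun j => β.getD j false) [p]).length
          = 1 := by
        cases hb : β[p] <;> simp [List.filter_cons, List.getElem?_eq_getElem hlt, hb, List.count_cons]
      have := ih (le_of_lt hlt)
      omega

lemma zb_mono (β : List Bool) {p q : ℕ} (h : p ≤ q) :
    zerosBefore β p ≤ zerosBefore β q := by
  unfold zerosBefore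
  have hpq : β.take p = (β.take q).take p := by rw [List.take_take, min_eq_left h]
  rw [hpq]
  exact (List.take_sublist _ _).count_le _

lemma mem_onesPositions {r : List Bool} {j : ℕ} :
    j ∈ onesPositions r ↔ j < r.length ∧ r.getD j false = true := by
  simp [onesPositions]

lemma onesPositions_pairwise (r : List Bool) : (onesPositions r).Pairwise (· < ·) :=
  List.pairwise_lt_range.filter _

lemma count_true_eq (β : List Bool) : β.count true = (onesPositions β).length := by
  induction β with
  | nil => rfl
  | cons b t ih =>
      unfold onesPositions at *
      rw [List.length_cons, List.range_succ_eq_map, List.filter_cons]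
      rw [List.filter_map]
      cases b <;> simp [Function.comp_def, ih, List.count_cons]

end
section

lemma filter_range_getElem (β : List Bool) {k : ℕ} (hk : k < (onesPositions β).length) :
    ((List.range ((onesPositions β)[k])).filter fun j => β.getD j false).length = k := by
  have hLpw : (onesPositions β).Pairwise (· < ·) := onesPositions_pairwise β
  have hLlt : (onesPositions β)[k] < β.length :=
    (mem_onesPositions.1 (List.getElem_mem hk)).1
  haveI : Std.Antisymm (α := ℕ) (· < ·) := ⟨fun a b h1 h2 => absurd h2 (not_lt_of_gt h1)⟩
  obtain ⟨m, hm⟩ : ∃ m, (onesPositions β)[k] = m := ⟨_, rfl⟩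
  rw [hm] at hLlt ⊢
  have hA : (List.range m).filter (fun j => β.getD j false) =
      (onesPositions β).filter (fun j => decide (j < m)) := by
    have p1 : ((List.range m).filter fun j => β.getD j false).Pairwise (· < ·) :=
      List.pairwise_lt_range.filter _
    have p2 : ((onesPositions β).filter fun j => decide (j < m)).Pairwise (· < ·) :=
      hLpw.filter _
    refine List.Perm.eq_of_pairwise' p1 p2 ?_
    refine (List.perm_ext_iff_of_nodup (p1.imp fun h => Nat.ne_of_lt h)
      (p2.imp fun h => Nat.ne_of_lt h)).mpr fun a => ?_
    simp only [List.mem_filter, List.mem_range, mem_onesPositions, decide_eq_true_eq]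
    constructor
    · rintro ⟨h1, h2⟩; exact ⟨⟨h1.trans hLlt, h2⟩, h1⟩
    · rintro ⟨⟨_, h2⟩, h1⟩; exact ⟨h1, h2⟩
  have hB : (onesPositions β).filter (fun j => decide (j < m)) =
      (onesPositions β).take k := by
    conv_lhs => rw [← List.take_append_drop k (onesPositions β)]
    rw [List.filter_append]
    have ht : ((onesPositions β).take k).filter
        (fun j => decide (j < m)) = (onesPositions β).take k := by
      apply List.filter_eq_self.mpr
      intro a ha
      obtain ⟨i, hi, rfl⟩ := List.mem_iff_getElem.1 ha
      rw [List.getElem_take]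
      have hik : i < k := by
        have := hi; rw [List.length_take] at this; omega
      exact decide_eq_true (hm ▸ List.pairwise_iff_getElem.1 hLpw _ _ _ hk hik)
    have hdr : ((onesPositions β).drop k).filter
        (fun j => decide (j < m)) = [] := by
      apply List.filter_eq_nil_iff.mpr
      intro a ha
      obtain ⟨i, hi, rfl⟩ := List.mem_iff_getElem.1 ha
      rw [List.getElem_drop]
      simp only [decide_eq_true_eq, not_lt]
      rcases Nat.eq_zero_or_pos i with rfl | hpos
      · simp [hm]
      · have hki : k < k + i := by omega
        have := List.pairwise_iff_getElem.1 hLpw k (k + i) hk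
          (by have := hi; rw [List.length_drop] at this; omega) hki
        rw [hm] at this
        exact le_of_lt this
    rw [ht, hdr, List.append_nil]
  rw [hA, hB, List.length_take]
  exact min_eq_left (le_of_lt hk)

lemma word_facts (β : List Bool) (hh : β.head? = some false) (hl : β.getLast? = some true) :
    (∀ j, β.getD j false = decide (j ∈ betaSet (shapeOf β))) ∧
    Multiset.card (shapeOf β) = β.count true := by
  have h0 : β.getD 0 false = false := by
    cases β with
    | nil => simp at hh
    | cons b t => simp at hh; simp [hh]
  have hlen0 : 0 < β.length := by
    cases β with
    | nil => simp at hh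
    | cons b t => simp
  have hzb_pos : ∀ j ∈ onesPositions β, 0 < zerosBefore β j := by
    intro j hj
    obtain ⟨hjl, hjt⟩ := mem_onesPositions.1 hj
    have hj0 : j ≠ 0 := by
      rintro rfl; rw [h0] at hjt; exact Bool.false_ne_true hjt
    have hmem : false ∈ β.take j := by
      rw [List.mem_iff_getElem]
      refine ⟨0, by rw [List.length_take]; omega, ?_⟩
      rw [List.getElem_take]
      rw [List.getD_eq_getElem _ _ hlen0] at h0
      exact h0
    exact List.count_pos_iff.mpr hmem
  have hshape : shapeOf β = ↑((onesPositions β).map fun p => zerosBefore β p) := by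
    unfold shapeOf
    congr 1
    rw [filterMap_ite (List.range β.length)
      (fun j => β.getD j false = true ∧ 0 < zerosBefore β j) (fun j => zerosBefore β j)]
    congr 1
    apply List.filter_congr
    intro j hj
    rw [List.mem_range] at hj
    by_cases ht : β.getD j false = true
    · have hpos : 0 < zerosBefore β j := hzb_pos j (mem_onesPositions.2 ⟨hj, ht⟩)
      simp [ht, hpos]
    · rw [Bool.not_eq_true] at ht
      rw [ht]
      apply decide_eq_false
      rintro ⟨hc, -⟩
      exact Bool.false_ne_true hc
  have hMsorted : List.Pairwise (· ≤ ·) ((onesPositions β).map fun p => zerosBefore β p) := by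
    rw [List.pairwise_map]
    exact (onesPositions_pairwise β).imp fun h => zb_mono β (le_of_lt h)
  have hsort : (shapeOf β).sort (· ≤ ·) = (onesPositions β).map fun p => zerosBefore β p := by
    apply List.Perm.eq_of_pairwise' (Multiset.pairwise_sort _ _) hMsorted
    rw [← Multiset.coe_eq_coe, Multiset.sort_eq, hshape]
  have hcard : Multiset.card (shapeOf β) = (onesPositions β).length := by
    rw [hshape]; simp
  have hzbL : ∀ k (hk : k < (onesPositions β).length),
      zerosBefore β (onesPositions β)[k] + k = (onesPositions β)[k] := by
    intro k hk
    have h1 := zb_add β (onesPositions β)[k]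
      (le_of_lt (mem_onesPositions.1 (List.getElem_mem hk)).1)
    rw [filter_range_getElem β hk] at h1
    exact h1
  have hbeta : betaSet (shapeOf β) = (onesPositions β).toFinset := by
    unfold betaSet
    rw [hsort]
    congr 1
    apply List.ext_getElem
    · simp
    · intro i h1 h2
      have hi : i < (onesPositions β).length := by simpa using h2
      simp only [List.getElem_map, List.getElem_range]
      rw [List.getD_eq_getElem _ _ (by simpa using hi), List.getElem_map]
      exact hzbL i hi
  constructor
  · intro j
    rw [hbeta]
    rcases lt_or_ge j β.length with hj | hj
    · cases hgd : β.getD j false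
      · symm
        apply decide_eq_false
        rw [List.mem_toFinset]
        intro hmem
        have := (mem_onesPositions.1 hmem).2
        rw [hgd] at this
        exact Bool.false_ne_true this
      · symm
        exact decide_eq_true (by rw [List.mem_toFinset]; exact mem_onesPositions.2 ⟨hj, hgd⟩)
    · rw [List.getD_eq_default _ _ hj]
      symm
      apply decide_eq_false
      rw [List.mem_toFinset]
      intro hmem
      have := (mem_onesPositions.1 hmem).1
      omega
  · rw [hcard, count_true_eq]

end
section
variable {d : ℕ}

lemma flatMap_replicate_sorted (d : ℕ) (s : List ℕ) (hs : List.Pairwise (· ≤ ·) s) :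
    List.Pairwise (· ≤ ·) (s.flatMap fun p => List.replicate d (d * p)) := by
  induction s with
  | nil => simp
  | cons p t ih =>
      rw [List.pairwise_cons] at hs
      rw [List.flatMap_cons]
      refine List.pairwise_append.mpr ⟨?_, ih hs.2, ?_⟩
      · exact List.pairwise_replicate.mpr (Or.inr le_rfl)
      · intro a ha b hb
        rw [List.mem_replicate] at ha
        rw [List.mem_flatMap] at hb
        obtain ⟨q, hq, hbq⟩ := hb
        rw [List.mem_replicate] at hbq
        rw [ha.2, hbq.2]
        exact Nat.mul_le_mul_left d (hs.1 q hq)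

lemma dilate_sort (d : ℕ) (lam : Multiset ℕ) :
    (dilate d lam).sort (· ≤ ·) =
      (lam.sort (· ≤ ·)).flatMap fun p => List.replicate d (d * p) := by
  refine List.Perm.eq_of_pairwise' (Multiset.pairwise_sort _ _)
    (flatMap_replicate_sorted d _ (Multiset.pairwise_sort _ _)) ?_
  rw [← Multiset.coe_eq_coe, Multiset.sort_eq]
  unfold dilate
  rw [← Multiset.coe_bind]
  conv_lhs => rw [← Multiset.sort_eq lam (· ≤ ·)]
  congr 1

lemma flatMap_replicate_length (s : List ℕ) (d : ℕ) :
    ((s.flatMap fun p => List.replicate d (d * p))).length = d * s.length := by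
  induction s with
  | nil => simp
  | cons p t ih => rw [List.flatMap_cons, List.length_append, List.length_replicate, ih,
      List.length_cons, Nat.mul_add, Nat.mul_one]; omega

lemma flatMap_replicate_getD (s : List ℕ) (hd : 0 < d) :
    ∀ m, m < d * s.length →
      ((s.flatMap fun p => List.replicate d (d * p))).getD m 0 = d * s.getD (m / d) 0 := by
  induction s with
  | nil => intro m hm; simp at hm
  | cons p t ih =>
      intro m hm
      rw [List.flatMap_cons]
      rcases lt_or_ge m d with h | h
      · rw [List.getD_eq_getElem _ _ (by
          rw [List.length_append, List.length_replicate]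
          exact lt_of_lt_of_le h (Nat.le_add_right _ _)),
          List.getElem_append_left (by simpa using h), List.getElem_replicate,
          Nat.div_eq_of_lt h, List.getD_cons_zero]
      · rw [List.getD_append_right _ _ _ _ (by simpa using h)]
        rw [List.length_replicate]
        have hm' : m - d < d * t.length := by
          rw [List.length_cons, Nat.mul_add, Nat.mul_one] at hm
          omega
        rw [ih (m - d) hm']
        have h3 : (m - d) / d + 1 = m / d := by
          rw [← Nat.add_div_right _ hd]
          congr 1
          omega
        rw [← h3, List.getD_cons_succ]

lemma mem_betaSet_dilate (hd : 0 < d) (lam : Multiset ℕ) (j : ℕ) :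
    j ∈ betaSet (dilate d lam) ↔ j / d ∈ betaSet lam := by
  unfold betaSet
  rw [dilate_sort]
  simp only [List.mem_toFinset, List.mem_map, List.mem_range]
  rw [flatMap_replicate_length]
  constructor
  · rintro ⟨m, hm, rfl⟩
    rw [flatMap_replicate_getD _ hd m hm]
    refine ⟨m / d, Nat.lt_of_mul_lt_mul_left (?_ : d * (m / d) < d * _), ?_⟩
    · calc d * (m / d) ≤ m := Nat.mul_div_le m d
        _ < d * (lam.sort (· ≤ ·)).length := hm
    · have h1 : d * (lam.sort (· ≤ ·)).getD (m / d) 0 + m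
          = d * ((lam.sort (· ≤ ·)).getD (m / d) 0 + m / d) + m % d := by
        rw [Nat.mul_add]
        have := Nat.div_add_mod m d
        omega
      rw [h1, Nat.mul_add_div hd, Nat.div_eq_of_lt (Nat.mod_lt m hd), Nat.add_zero]
  · rintro ⟨k, hk, hkval⟩
    refine ⟨d * k + j % d, ?_, ?_⟩
    · calc d * k + j % d < d * k + d := Nat.add_lt_add_left (Nat.mod_lt j hd) _
        _ = d * (k + 1) := by ring
        _ ≤ d * (lam.sort (· ≤ ·)).length := Nat.mul_le_mul_left d hk
    · rw [flatMap_replicate_getD _ hd _ (by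
        calc d * k + j % d < d * k + d := Nat.add_lt_add_left (Nat.mod_lt j hd) _
          _ = d * (k + 1) := by ring
          _ ≤ d * (lam.sort (· ≤ ·)).length := Nat.mul_le_mul_left d hk)]
      rw [Nat.mul_add_div hd, Nat.div_eq_of_lt (Nat.mod_lt j hd), Nat.add_zero]
      have := Nat.div_add_mod j d
      calc d * (lam.sort (· ≤ ·)).getD k 0 + (d * k + j % d)
          = d * ((lam.sort (· ≤ ·)).getD k 0 + k) + j % d := by ring
        _ = d * (j / d) + j % d := by rw [hkval]
        _ = j := by omega

lemma card_dilate (d : ℕ) (lam : Multiset ℕ) :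
    Multiset.card (dilate d lam) = d * Multiset.card lam := by
  unfold dilate
  rw [Multiset.card_bind]
  simp [Function.comp_def, Multiset.map_const', mul_comm]

end
section
variable {d : ℕ}

lemma top_facts (hd : 0 < d) (lam : Multiset ℕ) (C : Cascade) (hv : C.Valid)
    (hs : cascadeShape C = dilate d lam) :
    (∀ σ : Equiv.Perm (Fin d), permuteCols d σ C.top = C.top) ∧
    d ∣ C.top.length ∧ C.top.count true = d * Multiset.card lam := by
  obtain ⟨hh, hl, hsw, hbot⟩ := hv
  have hwf := word_facts C.top hh hl
  have hs' : shapeOf C.top = dilate d lam := hs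
  have htop : ∀ j, C.top.getD j false = decide (j / d ∈ betaSet lam) := by
    intro j
    rw [hwf.1 j, hs']
    exact decide_eq_decide.mpr (mem_betaSet_dilate hd lam j)
  have hlast : C.top.getD (C.top.length - 1) false = true := by
    rw [List.getD_eq_getElem?_getD, ← List.getLast?_eq_getElem?, hl]
    rfl
  have hdlen : d ∣ C.top.length := by
    have hb : decide ((C.top.length - 1) / d ∈ betaSet lam) = true := by
      rw [← htop]; exact hlast
    have hj0 : C.top.getD (d * ((C.top.length - 1) / d) + (d - 1)) false = true := by
      rw [htop]
      have hq : (d * ((C.top.length - 1) / d) + (d - 1)) / d = (C.top.length - 1) / d := by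
        rw [Nat.mul_add_div hd, Nat.div_eq_of_lt (show d - 1 < d by omega), Nat.add_zero]
      rw [hq]; exact hb
    have hlt : d * ((C.top.length - 1) / d) + (d - 1) < C.top.length := by
      by_contra hc
      push_neg at hc
      rw [List.getD_eq_default _ _ hc] at hj0
      exact Bool.false_ne_true hj0
    have hdm := Nat.div_add_mod (C.top.length - 1) d
    have hmod : (C.top.length - 1) % d < d := Nat.mod_lt _ hd
    refine ⟨(C.top.length - 1) / d + 1, ?_⟩
    rw [Nat.mul_add, Nat.mul_one]
    omega
  have hfix : ∀ σ : Equiv.Perm (Fin d), permuteCols d σ C.top = C.top := by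
    intro σ
    apply List.ext_getElem (length_permuteCols σ _)
    intro j h1 h2
    have hd2 := htop (gammaMap d σ⁻¹ j)
    rw [gammaMap_div hd] at hd2
    rw [getElem_permuteCols σ _ h1, hd2, ← htop j, List.getD_eq_getElem _ _ h2]
  have hcnt : C.top.count true = d * Multiset.card lam := by
    have h2 := hwf.2
    rw [hs', card_dilate] at h2
    exact h2.symm
  exact ⟨hfix, hdlen, hcnt⟩

end
section
variable {d : ℕ}

lemma getD_rep (u v j : ℕ) :
    (List.replicate u true ++ List.replicate v false).getD j false = decide (j < u) := by
  rcases lt_or_ge j u with h | h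
  · rw [List.getD_append _ _ _ _ (by simpa using h),
      List.getD_eq_getElem _ _ (by simpa using h), List.getElem_replicate]
    simp [h]
  · rcases lt_or_ge j (u + v) with h2 | h2
    · rw [List.getD_append_right _ _ _ _ (by simpa using h),
        List.getD_eq_getElem _ _ (by simp; omega), List.getElem_replicate]
      simp; omega
    · rw [List.getD_eq_default _ _ (by simp; omega)]
      simp; omega

lemma lt_iff_div_lt (hd : 0 < d) {u x : ℕ} (hu : d ∣ u) : x < u ↔ x / d < u / d := by
  constructor
  · exact fun h => Nat.div_lt_div_of_lt_of_dvd hu h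
  · intro h
    by_contra hc
    push_neg at hc
    exact absurd (Nat.div_le_div_right (c := d) hc) (not_le_of_gt h)

lemma permuteCols_rep (hd : 0 < d) (σ : Equiv.Perm (Fin d)) {u v : ℕ}
    (hu : d ∣ u) :
    permuteCols d σ (List.replicate u true ++ List.replicate v false) =
      List.replicate u true ++ List.replicate v false := by
  apply List.ext_getElem (length_permuteCols σ _)
  intro j h1 h2
  rw [getElem_permuteCols σ _ h1, getD_rep, ← List.getD_eq_getElem _ false h2, getD_rep]
  congr 1
  apply propext
  rw [lt_iff_div_lt hd hu, gammaMap_div hd, ← lt_iff_div_lt hd hu]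

end
/-- The pairing (σ, C) ↦ C·Φ(σ)⁻¹ defines an action of S_d on the set of cascades of
shape 𝝀 and content α: it maps the set to itself, the identity acts trivially, and the
pairing is compatible with multiplication. -/
theorem action_on_cascades (d n : ℕ) (hd : 0 < d) (hn : 0 < n)
    (lam : Multiset ℕ) (hlam : IsPartitionOf n lam)
    (alpha : List ℕ) (halpha : ∀ a ∈ alpha, 0 < a ∧ d ∣ a) (hsum : alpha.sum = d ^ 2 * n) :
    (∀ (σ : Equiv.Perm (Fin d)) (C : Cascade),
      C.Valid → cascadeShape C = dilate d lam → cascadeContent C = alpha →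
        (actC d σ C).Valid ∧ cascadeShape (actC d σ C) = dilate d lam ∧
          cascadeContent (actC d σ C) = alpha) ∧
    (∀ C : Cascade,
      C.Valid → cascadeShape C = dilate d lam → cascadeContent C = alpha →
        actC d 1 C = C) ∧
    (∀ (σ τ : Equiv.Perm (Fin d)) (C : Cascade),
      C.Valid → cascadeShape C = dilate d lam → cascadeContent C = alpha →
        actC d (σ * τ) C = actC d σ (actC d τ C)) := by
  refine ⟨?_, ?_, ?_⟩
  · -- the action maps the set to itself
    intro σ C hv hs hc
    obtain ⟨hfix, hdlen, hcnt⟩ := top_facts hd lam C hv hs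
    have htopfix := hfix σ
    have hh := hv.1
    have hl := hv.2.1
    have hsw := hv.2.2.1
    obtain ⟨u, w, hbot⟩ := hv.2.2.2
    have hmemsub : ∀ ab ∈ C.swaps, 0 < ab.2 - ab.1 ∧ d ∣ (ab.2 - ab.1) := by
      intro ab hab
      apply halpha
      rw [← hc]
      exact List.mem_map_of_mem hab
    have hrow : ∀ i, cascadeRow (actC d σ C) i = permuteCols d σ (cascadeRow C i) := by
      intro i
      show applySwaps (permuteCols d σ C.top)
        ((C.swaps.map fun ab => (gammaMap d σ ab.1, gammaMap d σ ab.2)).take i) = _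
      rw [← List.map_take, permuteCols_applySwaps hd σ _ hdlen]
      rfl
    -- divisibility of u and u + w
    have hlenbot : u + w = C.top.length := by
      have h := length_applySwaps C.top C.swaps
      rw [show applySwaps C.top C.swaps = cascadeBot C from rfl, hbot] at h
      simpa using h
    have hu : d ∣ u := by
      have hcb : (cascadeBot C).count true = C.top.count true := by
        rw [cascadeBot_eq_row]
        exact count_true_cascadeRow C hv _ le_rfl
      rw [hbot] at hcb
      simp [List.count_append, List.count_replicate] at hcb
      exact ⟨Multiset.card lam, by rw [hcb, hcnt]⟩
    refine ⟨⟨?_, ?_, ?_, u, w, ?_⟩, ?_, ?_⟩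
    · show (permuteCols d σ C.top).head? = some false
      rw [htopfix]; exact hh
    · show (permuteCols d σ C.top).getLast? = some true
      rw [htopfix]; exact hl
    · intro i hi
      have hi' : i < C.swaps.length := by simpa [actC] using hi
      have hgetD : (actC d σ C).swaps.getD i (0, 0) =
          (gammaMap d σ (C.swaps.getD i (0, 0)).1, gammaMap d σ (C.swaps.getD i (0, 0)).2) := by
        show (C.swaps.map _).getD i (0, 0) = _
        rw [List.getD_eq_getElem _ _ (by simpa using hi'), List.getElem_map,
          List.getD_eq_getElem _ _ hi']
      obtain ⟨hab, hblt, hfa, htb⟩ := hsw i hi'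
      have hmem : C.swaps.getD i (0, 0) ∈ C.swaps := by
        rw [List.getD_eq_getElem _ _ hi']
        exact List.getElem_mem _
      obtain ⟨hpos, hdvd⟩ := hmemsub _ hmem
      have hγb : gammaMap d σ (C.swaps.getD i (0, 0)).2 =
          gammaMap d σ (C.swaps.getD i (0, 0)).1 +
            ((C.swaps.getD i (0, 0)).2 - (C.swaps.getD i (0, 0)).1) := by
        conv_lhs => rw [show (C.swaps.getD i (0, 0)).2 =
          (C.swaps.getD i (0, 0)).1 + ((C.swaps.getD i (0, 0)).2 - (C.swaps.getD i (0, 0)).1)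
          by omega]
        rw [gammaMap_add hd σ _ _ hdvd]
      have hrowdvd : d ∣ (cascadeRow C i).length := by
        rw [length_cascadeRow]; exact hdlen
      have halt : (C.swaps.getD i (0, 0)).1 < (cascadeRow C i).length := lt_trans hab hblt
      have hγa : gammaMap d σ (C.swaps.getD i (0, 0)).1 < (cascadeRow C i).length :=
        gammaMap_lt hd σ hrowdvd halt
      have hγb2 : gammaMap d σ (C.swaps.getD i (0, 0)).2 < (cascadeRow C i).length :=
        gammaMap_lt hd σ hrowdvd hblt
      rw [hgetD, hrow i]
      refine ⟨?_, ?_, ?_, ?_⟩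
      · show gammaMap d σ _ < gammaMap d σ _
        rw [hγb]; omega
      · show gammaMap d σ _ < (permuteCols d σ (cascadeRow C i)).length
        rw [length_permuteCols]
        exact hγb2
      · show (permuteCols d σ (cascadeRow C i)).getD (gammaMap d σ _) true = false
        rw [List.getD_eq_getElem _ _ (by rw [length_permuteCols]; exact hγa),
          getElem_permuteCols, gammaMap_inv hd]
        rw [List.getD_eq_getElem _ _ halt] at hfa
        rw [List.getD_eq_getElem _ _ halt]
        exact hfa
      · show (permuteCols d σ (cascadeRow C i)).getD (gammaMap d σ _) false = true
        rw [List.getD_eq_getElem _ _ (by rw [length_permuteCols]; exact hγb2),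
          getElem_permuteCols, gammaMap_inv hd]
        rw [List.getD_eq_getElem _ _ hblt] at htb
        rw [List.getD_eq_getElem _ _ hblt]
        exact htb
    · show applySwaps (permuteCols d σ C.top)
        (C.swaps.map fun ab => (gammaMap d σ ab.1, gammaMap d σ ab.2)) = _
      rw [permuteCols_applySwaps hd σ _ hdlen]
      rw [show applySwaps C.top C.swaps = cascadeBot C from rfl, hbot]
      exact permuteCols_rep hd σ hu
    · show shapeOf (permuteCols d σ C.top) = _
      rw [htopfix]; exact hs
    · show ((C.swaps.map fun ab => (gammaMap d σ ab.1, gammaMap d σ ab.2)).map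
        fun ab => ab.2 - ab.1) = alpha
      rw [List.map_map, ← hc]
      apply List.map_congr_left
      intro ab hab
      obtain ⟨hpos, hdvd⟩ := hmemsub ab hab
      show gammaMap d σ ab.2 - gammaMap d σ ab.1 = ab.2 - ab.1
      conv_lhs => rw [show ab.2 = ab.1 + (ab.2 - ab.1) by omega]
      rw [gammaMap_add hd σ _ _ hdvd]
      omega
  · -- identity acts trivially
    intro C hv hs hc
    obtain ⟨hfix, -, -⟩ := top_facts hd lam C hv hs
    have h1 : permuteCols d 1 C.top = C.top := hfix 1
    have h2 : (C.swaps.map fun ab => (gammaMap d 1 ab.1, gammaMap d 1 ab.2)) = C.swaps := by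
      have : ∀ ab ∈ C.swaps, (gammaMap d 1 ab.1, gammaMap d 1 ab.2) = id ab := by
        intro ab _
        rw [gammaMap_one hd, gammaMap_one hd, id]
      rw [List.map_congr_left this, List.map_id]
    show Cascade.mk _ _ = C
    rw [h1, h2]
  · -- compatibility with multiplication
    intro σ τ C hv hs hc
    obtain ⟨hfix, -, -⟩ := top_facts hd lam C hv hs
    show Cascade.mk _ _ = Cascade.mk _ _
    congr 1
    · show permuteCols d (σ * τ) C.top = permuteCols d σ (permuteCols d τ C.top)
      rw [hfix, hfix, hfix]
    · show (C.swaps.map fun ab => (gammaMap d (σ * τ) ab.1, gammaMap d (σ * τ) ab.2)) =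
        ((C.swaps.map fun ab => (gammaMap d τ ab.1, gammaMap d τ ab.2)).map
          fun ab => (gammaMap d σ ab.1, gammaMap d σ ab.2))
      rw [List.map_map]
      apply List.map_congr_left
      intro ab _
      show (gammaMap d (σ * τ) ab.1, gammaMap d (σ * τ) ab.2) = _
      rw [← gammaMap_comp hd, ← gammaMap_comp hd]
      rfl
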